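/- Let γ' be an arc in a proper domain G' of a real Banach space with endpoints x' and y', and let z₀' ∈ γ' be a point maximizing d_{G'} over γ'. Suppose there is a constant c₂ ≥ 1 such that min{diam(γ'[x',w']), diam(γ'[y',w'])} ≤ c₂·d_{G'}(w') for every w' ∈ γ'. Then for every z' ∈ γ'[x', z₀'], diam(γ'[x', z']) ≤ 2c₂·d_{G'}(z₀'). -/

import Mathlib

open Set Metric

section Defs

variable {E : Type*} [NormedAddCommGroup E] [NormedSpace ℝ E]
variable {E' : Type*} [NormedAddCommGroup E'] [NormedSpace ℝ E']

/-- Distance from a point to the boundary of `D`. -/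
noncomputable def bdDist (D : Set E) (z : E) : ℝ := Metric.infDist z (frontier D)

/-- `γ` (with derivative `γ'`) is a rectifiable curve in `D` from `x` to `y`,
parametrized on `[0,1]`. -/
def IsCurve (D : Set E) (γ γ' : ℝ → E) (x y : E) : Prop :=
  (∀ t ∈ Icc (0:ℝ) 1, γ t ∈ D) ∧ (∀ t ∈ Icc (0:ℝ) 1, HasDerivAt γ (γ' t) t) ∧
    ContinuousOn γ' (Icc 0 1) ∧ γ 0 = x ∧ γ 1 = y

/-- Arclength of a curve between parameter values `a` and `b`. -/
noncomputable def clen (γ' : ℝ → E) (a b : ℝ) : ℝ := ∫ t in a..b, ‖γ' t‖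

/-- Quasihyperbolic length of a curve between parameter values `a` and `b`. -/
noncomputable def qhLen (D : Set E) (γ γ' : ℝ → E) (a b : ℝ) : ℝ :=
  ∫ t in a..b, ‖γ' t‖ / bdDist D (γ t)

/-- The quasihyperbolic distance in `D`. -/
noncomputable def qhDist (D : Set E) (x y : E) : ℝ :=
  sInf {l : ℝ | ∃ γ γ' : ℝ → E, IsCurve D γ γ' x y ∧ l = qhLen D γ γ' 0 1}

/-- `γ` is a `ν`-neargeodesic from `x` to `y` in `D`. -/
def IsNeargeodesic (ν : ℝ) (D : Set E) (γ γ' : ℝ → E) (x y : E) : Prop :=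
  IsCurve D γ γ' x y ∧ ∀ s t : ℝ, 0 ≤ s → s ≤ t → t ≤ 1 →
    qhLen D γ γ' s t ≤ ν * qhDist D (γ s) (γ t)

/-- `D` is a `c`-uniform domain: any two points are joined by a double `c`-cone arc. -/
def IsUniform (c : ℝ) (D : Set E) : Prop :=
  ∀ x ∈ D, ∀ y ∈ D, ∃ γ γ' : ℝ → E, IsCurve D γ γ' x y ∧
    (∀ t ∈ Icc (0:ℝ) 1, min (clen γ' 0 t) (clen γ' t 1) ≤ c * bdDist D (γ t)) ∧
    clen γ' 0 1 ≤ c * ‖x - y‖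

/-- `f` is `C`-coarsely `M`-quasihyperbolic from `D` to `D'`. -/
def IsCQH (M C : ℝ) (D : Set E) (D' : Set E') (f : E → E') : Prop :=
  ∀ x ∈ D, ∀ y ∈ D,
    (qhDist D x y - C) / M ≤ qhDist D' (f x) (f y) ∧
      qhDist D' (f x) (f y) ≤ M * qhDist D x y + C

/-- `f` is a homeomorphism of `S` onto `S'`. -/
def IsHomeoOn (f : E → E') (S : Set E) (S' : Set E') : Prop :=
  ContinuousOn f S ∧ InjOn f S ∧ f '' S = S' ∧
    ∃ g : E' → E, ContinuousOn g S' ∧ ∀ x ∈ S, g (f x) = x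

/-- The cross ratio of a quadruple. -/
noncomputable def crossRatio (a b c d : E) : ℝ :=
  (dist a b / dist a c) * (dist c d / dist b d)

/-- `F` is `η`-quasimöbius relative to `∂D` (on the closure of `D`). -/
def IsQMRelBoundary (η : ℝ → ℝ) (D : Set E) (F : E → E') : Prop :=
  ∀ a b c d : E, a ∈ closure D → b ∈ closure D → c ∈ closure D → d ∈ closure D →
    a ≠ b → a ≠ c → a ≠ d → b ≠ c → b ≠ d → c ≠ d →
    ((a ∈ frontier D ∧ d ∈ frontier D) ∨ (b ∈ frontier D ∧ c ∈ frontier D)) →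
    crossRatio (F a) (F b) (F c) (F d) ≤ η (crossRatio a b c d)

/-- `η` is a self-homeomorphism of `[0,∞)` (a distortion gauge). -/
def IsGauge (η : ℝ → ℝ) : Prop :=
  StrictMonoOn η (Ici 0) ∧ ContinuousOn η (Ici 0) ∧ η 0 = 0 ∧ SurjOn η (Ici 0) (Ici 0)

end Defs

/-- Claim 2.10: for an arc `γ` in a proper domain `G'` with endpoints `x'`, `y'`
satisfying the cone-type diameter estimate with constant `c₂`, and `z₀' = γ(t₀)` maximizing the
distance to the boundary over `γ`, every point `z' = γ(s)` of `γ[x', z₀']` satisfies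
`diam(γ[x', z']) ≤ 2c₂·d_{G'}(z₀')`. -/
private theorem stmt5_aux {E : Type*} [NormedAddCommGroup E] [NormedSpace ℝ E] [CompleteSpace E]
    (G' : Set E)
    (γ : ℝ → E) (hcont : ContinuousOn γ (Icc 0 1))
    (hmem : ∀ t ∈ Icc (0:ℝ) 1, γ t ∈ G')
    (t₀ : ℝ) (ht₀ : t₀ ∈ Icc (0:ℝ) 1)
    (hmax : ∀ t ∈ Icc (0:ℝ) 1, Metric.infDist (γ t) (frontier G') ≤ Metric.infDist (γ t₀) (frontier G'))
    (c₂ : ℝ) (hc₂ : 1 ≤ c₂)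
    (hcone : ∀ w ∈ Icc (0:ℝ) 1,
      min (Metric.diam (γ '' Icc 0 w)) (Metric.diam (γ '' Icc w 1)) ≤ c₂ * Metric.infDist (γ w) (frontier G')) :
    ∀ s ∈ Icc (0:ℝ) t₀, Metric.diam (γ '' Icc 0 s) ≤ 2 * c₂ * Metric.infDist (γ t₀) (frontier G') := by
  intro s hs
  obtain ⟨hs0, hst⟩ := hs
  have hs1 : s ≤ 1 := hst.trans ht₀.2
  have hsub : Icc (0:ℝ) s ⊆ Icc 0 1 := Icc_subset_Icc le_rfl hs1
  set d₀ := Metric.infDist (γ t₀) (frontier G') with hd₀def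
  by_contra hcon
  push_neg at hcon
  set D := Metric.diam (γ '' Icc 0 s) with hDdef
  -- key splitting lemma
  have hsplit : ∀ u v w : ℝ, u ≤ v → v ≤ w →
      Metric.diam (γ '' Icc u w) ≤ Metric.diam (γ '' Icc u v) + Metric.diam (γ '' Icc v w) := by
    intro u v w huv hvw
    have : γ '' Icc u w = γ '' Icc u v ∪ γ '' Icc v w := by
      rw [← image_union, Icc_union_Icc_eq_Icc huv hvw]
    rw [this]
    exact Metric.diam_union' ⟨γ v, ⟨v, ⟨huv, le_rfl⟩, rfl⟩, ⟨v, ⟨le_rfl, hvw⟩, rfl⟩⟩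
  -- g is the diameter of the tail
  set g : ℝ → ℝ := fun w => Metric.diam (γ '' Icc w s) with hgdef
  -- continuity of g on [0,s]
  have hgcont : ContinuousOn g (Icc 0 s) := by
    have huc : UniformContinuousOn γ (Icc 0 1) :=
      isCompact_Icc.uniformContinuousOn_of_continuous hcont
    rw [Metric.uniformContinuousOn_iff] at huc
    intro a ha
    rw [Metric.continuousWithinAt_iff]
    intro ε hε
    obtain ⟨δ, hδ, hδ'⟩ := huc (ε / 2) (by linarith)
    refine ⟨δ, hδ, fun w hw hwd => ?_⟩
    have key : ∀ u v : ℝ, u ∈ Icc (0:ℝ) s → v ∈ Icc (0:ℝ) s → u ≤ v → dist u v < δ →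
        g u - g v ≤ ε / 2 ∧ 0 ≤ g u - g v := by
      intro u v hu hv huv hd
      constructor
      · have h1 := hsplit u v s huv hv.2
        have h2 : Metric.diam (γ '' Icc u v) ≤ ε / 2 := by
          apply Metric.diam_le_of_forall_dist_le (by linarith)
          rintro p ⟨p', hp', rfl⟩ q ⟨q', hq', rfl⟩
          have hp1 : p' ∈ Icc (0:ℝ) 1 := ⟨hu.1.trans hp'.1, hp'.2.trans (hv.2.trans hs1)⟩
          have hq1 : q' ∈ Icc (0:ℝ) 1 := ⟨hu.1.trans hq'.1, hq'.2.trans (hv.2.trans hs1)⟩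
          have : dist p' q' < δ := by
            rw [Real.dist_eq] at hd ⊢
            rw [abs_lt] at hd ⊢
            constructor <;> [linarith [hp'.1, hp'.2, hq'.1, hq'.2]; linarith [hp'.1, hp'.2, hq'.1, hq'.2]]
          exact le_of_lt (hδ' p' hp1 q' hq1 this)
        simp only [hgdef]
        linarith
      · have : γ '' Icc v s ⊆ γ '' Icc u s := image_mono (Icc_subset_Icc huv le_rfl)
        have hb : Bornology.IsBounded (γ '' Icc u s) :=
          ((isCompact_Icc.image_of_continuousOn (hcont.mono (Icc_subset_Icc hu.1 hs1)))).isBounded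
        linarith [Metric.diam_mono this hb]
    rcases le_total w a with h | h
    · have := key w a hw ha h hwd
      rw [Real.dist_eq, abs_lt]; constructor <;> linarith [this.1, this.2]
    · have hd' : dist a w < δ := by rwa [dist_comm]
      have := key a w ha hw h hd'
      rw [Real.dist_eq, abs_lt]; constructor <;> linarith [this.1, this.2]
  -- g s = 0, g 0 = D
  have hgs : g s = 0 := by
    simp only [hgdef, Icc_self, image_singleton, Metric.diam_singleton]
  have hg0 : g 0 = D := rfl
  -- IVT: find w with g w = D/2
  have hD0 : 0 ≤ d₀ := Metric.infDist_nonneg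
  have hDpos : 0 < D := lt_of_le_of_lt (by positivity) hcon
  have hivt : D / 2 ∈ g '' Icc 0 s := by
    apply intermediate_value_Icc' hs0 hgcont
    rw [hgs, hg0]
    constructor <;> linarith
  obtain ⟨w, hw, hgw⟩ := hivt
  have hw1 : w ∈ Icc (0:ℝ) 1 := hsub hw
  -- lower bounds
  have hlb1 : D / 2 ≤ Metric.diam (γ '' Icc 0 w) := by
    have := hsplit 0 w s hw.1 hw.2
    simp only [hgdef] at hgw
    linarith
  have hlb2 : D / 2 ≤ Metric.diam (γ '' Icc w 1) := by
    have hsub2 : γ '' Icc w s ⊆ γ '' Icc w 1 := image_mono (Icc_subset_Icc le_rfl hs1)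
    have hb : Bornology.IsBounded (γ '' Icc w 1) :=
      (isCompact_Icc.image_of_continuousOn (hcont.mono (Icc_subset_Icc hw1.1 le_rfl))).isBounded
    have := Metric.diam_mono hsub2 hb
    simp only [hgdef] at hgw
    linarith
  have := hcone w hw1
  have hmin : D / 2 ≤ min (Metric.diam (γ '' Icc 0 w)) (Metric.diam (γ '' Icc w 1)) :=
    le_min hlb1 hlb2
  have hdw : Metric.infDist (γ w) (frontier G') ≤ d₀ := hmax w hw1
  have : D / 2 ≤ c₂ * d₀ := by
    calc D / 2 ≤ c₂ * Metric.infDist (γ w) (frontier G') := hmin.trans this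
    _ ≤ c₂ * d₀ := by
        apply mul_le_mul_of_nonneg_left hdw (by linarith)
  linarith


theorem stmt5 {E : Type*} [NormedAddCommGroup E] [NormedSpace ℝ E] [CompleteSpace E]
    (G' : Set E) (hGopen : IsOpen G') (hGconn : IsConnected G') (hGproper : G' ≠ univ)
    (γ : ℝ → E) (hcont : ContinuousOn γ (Icc 0 1)) (hinj : InjOn γ (Icc 0 1))
    (hmem : ∀ t ∈ Icc (0:ℝ) 1, γ t ∈ G')
    (x' y' : E) (hx : γ 0 = x') (hy : γ 1 = y')
    (t₀ : ℝ) (ht₀ : t₀ ∈ Icc (0:ℝ) 1)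
    (hmax : ∀ t ∈ Icc (0:ℝ) 1, bdDist G' (γ t) ≤ bdDist G' (γ t₀))
    (c₂ : ℝ) (hc₂ : 1 ≤ c₂)
    (hcone : ∀ w ∈ Icc (0:ℝ) 1,
      min (Metric.diam (γ '' Icc 0 w)) (Metric.diam (γ '' Icc w 1)) ≤ c₂ * bdDist G' (γ w)) :
    ∀ s ∈ Icc (0:ℝ) t₀, Metric.diam (γ '' Icc 0 s) ≤ 2 * c₂ * bdDist G' (γ t₀) :=
  stmt5_aux G' γ hcont hmem t₀ ht₀ hmax c₂ hc₂ hcone
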